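/- Let G be a simple chordal graph with no cut edges (bridges) in which every vertex has degree at least 2. Then every vertex of G lies in a triangle, i.e., for every vertex v there exist vertices u and w such that {u,v}, {v,w}, and {u,w} are all edges of G. -/

import Mathlib

/-- `G` is chordal: every cycle of length at least four has a chord, i.e. an edge
of `G` joining two vertices of the cycle that is not an edge of the cycle. -/
def SimpleGraph.IsChordal {V : Type*} (G : SimpleGraph V) : Prop :=
  ∀ (v : V) (c : G.Walk v v), c.IsCycle → 4 ≤ c.length →
    ∃ u w : V, u ∈ c.support ∧ w ∈ c.support ∧ G.Adj u w ∧ s(u, w) ∉ c.edges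

section Aux

variable {V : Type*} {G : SimpleGraph V}

private lemma edge_of_length_one {a b : V} {p : G.Walk a b} (h : p.length = 1) :
    s(a, b) ∈ p.edges := by
  cases p with
  | nil => simp at h
  | cons h' p' =>
    cases p' with
    | nil => simp
    | cons h'' p'' => simp [SimpleGraph.Walk.length_cons] at h

private lemma mem_tail_of_closed {u : V} {c : G.Walk u u} (hc : ¬ c.Nil) :
    u ∈ c.support.tail := by
  cases c with
  | nil => exact absurd SimpleGraph.Walk.nil_nil hc
  | cons h p => simpa using p.end_mem_support

private lemma mem_tail_of_mem_support {u a : V} {c : G.Walk u u}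
    (hc : ¬ c.Nil) (ha : a ∈ c.support) : a ∈ c.support.tail := by
  rw [c.support_eq_cons, List.mem_cons] at ha
  rcases ha with rfl | ha
  · exact mem_tail_of_closed hc
  · exact ha

private lemma my_rotate_length [DecidableEq V] {u x : V} {c : G.Walk u u}
    (h : x ∈ c.support) : (c.rotate x h).length = c.length := by
  have h2 := congrArg SimpleGraph.Walk.length (c.take_spec h)
  rw [SimpleGraph.Walk.length_append] at h2
  rw [SimpleGraph.Walk.rotate, SimpleGraph.Walk.length_append]
  omega

/-- Split a cycle at an interior vertex: both halves are paths. -/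
private lemma split_cycle [DecidableEq V] {u w : V} {c : G.Walk u u} (hc : c.IsCycle)
    (hw : w ∈ c.support) (hne : w ≠ u) :
    (c.takeUntil w hw).IsPath ∧ (c.dropUntil w hw).IsPath := by
  set p := c.takeUntil w hw with hp
  set q := c.dropUntil w hw with hq
  have hspec : p.append q = c := c.take_spec hw
  have hsupp : p.support ++ q.support.tail = c.support := by
    rw [← SimpleGraph.Walk.support_append, hspec]
  have htail : p.support.tail ++ q.support.tail = c.support.tail := by
    rw [← hsupp, p.support_eq_cons]
    simp
  have hnodup : c.support.tail.Nodup := hc.support_nodup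
  rw [← htail, List.nodup_append] at hnodup
  obtain ⟨hnp, hnq, hdisj⟩ := hnodup
  have hwp : w ∈ p.support.tail := by
    have := p.end_mem_support
    rw [p.support_eq_cons, List.mem_cons] at this
    exact this.resolve_left hne
  have huq : u ∈ q.support.tail := by
    have := q.end_mem_support
    rw [q.support_eq_cons, List.mem_cons] at this
    exact this.resolve_left (Ne.symm hne)
  have htrail := hc.isTrail
  constructor
  · refine ⟨htrail.takeUntil hw, ?_⟩
    rw [p.support_eq_cons]
    exact List.nodup_cons.2 ⟨fun hu => hdisj _ hu _ huq rfl, hnp⟩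
  · refine ⟨htrail.dropUntil hw, ?_⟩
    rw [q.support_eq_cons]
    exact List.nodup_cons.2 ⟨fun hw' => hdisj _ hwp _ hw' rfl, hnq⟩

private theorem main_lemma {V : Type*} [Fintype V] [DecidableEq V] (G : SimpleGraph V)
    [DecidableRel G.Adj] (hchordal : G.IsChordal) (v : V) :
    ∀ n (u : V) (c : G.Walk u u), c.IsCycle → v ∈ c.support → c.length ≤ n →
      ∃ u w : V, G.Adj u v ∧ G.Adj v w ∧ G.Adj u w := by
  intro n
  induction n with
  | zero =>
    intro u c hc _ hlen
    have := hc.three_le_length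
    omega
  | succ n ih =>
    intro u c hc hv hlen
    by_cases h4 : 4 ≤ c.length
    · -- get a chord
      obtain ⟨x, y, hx, hy, hadj, hne⟩ := hchordal u c hc h4
      -- rotate the cycle to start at x
      have hcnil : ¬ c.Nil := hc.not_nil
      set c₂ := c.rotate x hx with hc₂
      have hc₂cyc : c₂.IsCycle := hc.rotate hx
      have htailperm : List.Perm c₂.support.tail c.support.tail := (c.support_rotate x hx).perm
      have hedges : ∀ {e}, e ∈ c₂.edges → e ∈ c.edges :=
        fun he => (c.rotate_edges x hx).perm.mem_iff.1 he
      have hmem : ∀ {a}, a ∈ c.support → a ∈ c₂.support := by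
        intro a ha
        exact List.mem_of_mem_tail
          (htailperm.mem_iff.2 (mem_tail_of_mem_support hcnil ha))
      have hy₂ : y ∈ c₂.support := hmem hy
      have hv₂ : v ∈ c₂.support := hmem hv
      have hxy : y ≠ x := fun h => G.irrefl (h ▸ hadj)
      have hne₂ : s(x, y) ∉ c₂.edges := fun h => hne (hedges h)
      -- split at y
      set p := c₂.takeUntil y hy₂ with hp
      set q := c₂.dropUntil y hy₂ with hq
      obtain ⟨hpath, hqpath⟩ := split_cycle hc₂cyc hy₂ hxy
      have hspec : p.append q = c₂ := c₂.take_spec hy₂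
      have hlen₂ : c₂.length = c.length := my_rotate_length hx
      have hlensum : p.length + q.length = c.length := by
        rw [← hlen₂, ← hspec, SimpleGraph.Walk.length_append]
      have hpe : ∀ {e}, e ∈ p.edges → e ∈ c₂.edges := by
        intro e he
        rw [← hspec, SimpleGraph.Walk.edges_append]
        exact List.mem_append_left _ he
      have hqe : ∀ {e}, e ∈ q.edges → e ∈ c₂.edges := by
        intro e he
        rw [← hspec, SimpleGraph.Walk.edges_append]
        exact List.mem_append_right _ he
      have hp1 : p.length ≠ 1 := fun h => hne₂ (hpe (edge_of_length_one h))
      have hq1 : q.length ≠ 1 := by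
        intro h
        have h2 := edge_of_length_one h
        rw [Sym2.eq_swap] at h2
        exact hne₂ (hqe h2)
      have hp0 : p.length ≠ 0 := by
        intro h
        exact hxy ((SimpleGraph.Walk.eq_of_length_eq_zero h).symm)
      have hq0 : q.length ≠ 0 := by
        intro h
        exact hxy (SimpleGraph.Walk.eq_of_length_eq_zero h)
      -- v is in p or q
      have hvpq : v ∈ p.support ∨ v ∈ q.support := by
        rw [← SimpleGraph.Walk.mem_support_append_iff, hspec]; exact hv₂
      rcases hvpq with hvp | hvq
      · refine ih x (SimpleGraph.Walk.cons hadj p.reverse) ?_ ?_ ?_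
        · rw [SimpleGraph.Walk.cons_isCycle_iff]
          refine ⟨hpath.reverse, ?_⟩
          rw [SimpleGraph.Walk.edges_reverse, List.mem_reverse]
          exact fun h => hne₂ (hpe h)
        · rw [SimpleGraph.Walk.support_cons]
          refine List.mem_cons_of_mem _ ?_
          rw [SimpleGraph.Walk.support_reverse, List.mem_reverse]
          exact hvp
        · simp only [SimpleGraph.Walk.length_cons, SimpleGraph.Walk.length_reverse]
          omega
      · refine ih x (SimpleGraph.Walk.cons hadj q) ?_ ?_ ?_
        · rw [SimpleGraph.Walk.cons_isCycle_iff]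
          exact ⟨hqpath, fun h => hne₂ (hqe h)⟩
        · rw [SimpleGraph.Walk.support_cons]
          exact List.mem_cons_of_mem _ hvq
        · simp only [SimpleGraph.Walk.length_cons]
          omega
    · -- length = 3: extract triangle
      have h3len := hc.three_le_length
      have hlen3 : c.length = 3 := by omega
      have hc' : (c.rotate v hv).IsCycle := hc.rotate hv
      have hc'len : (c.rotate v hv).length = 3 := by rw [my_rotate_length hv]; exact hlen3
      set c' := c.rotate v hv with hcc'
      clear_value c'
      clear hcc'
      match c' with
      | .nil => simp at hc'len
      | .cons h1 (.nil) => simp at hc'len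
      | .cons h1 (.cons h2 (.nil)) => simp [SimpleGraph.Walk.length_cons] at hc'len
      | .cons h1 (.cons h2 (.cons h3 (.nil))) =>
        exact ⟨_, _, h3, h1, h2.symm⟩
      | .cons h1 (.cons h2 (.cons h3 (.cons h4 r))) =>
        simp [SimpleGraph.Walk.length_cons] at hc'len

end Aux

theorem stmt0 {V : Type*} [Fintype V] [DecidableEq V] (G : SimpleGraph V)
    [DecidableRel G.Adj]
    (hchordal : G.IsChordal)
    (hbridge : ∀ e : Sym2 V, ¬ G.IsBridge e)
    (hdeg : ∀ v : V, 2 ≤ G.degree v) :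
    ∀ v : V, ∃ u w : V, G.Adj u v ∧ G.Adj v w ∧ G.Adj u w := by
  intro v
  -- v has a neighbor
  have hpos : 0 < G.degree v := lt_of_lt_of_le (by norm_num) (hdeg v)
  rw [SimpleGraph.degree_pos_iff_exists_adj] at hpos
  obtain ⟨w, hadj⟩ := hpos
  have hnb := hbridge s(v, w)
  rw [SimpleGraph.isBridge_iff_forall_cycle_notMem hadj] at hnb
  push_neg at hnb
  obtain ⟨u, c, hc, he⟩ := hnb
  exact main_lemma G hchordal v c.length u c hc
    (SimpleGraph.Walk.fst_mem_support_of_mem_edges c he) le_rfl
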